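/- For every a ≥ 4 the following closed formulas hold for partitions of n = a+4 with first part a: η_{(a,4)} = 2·(−1)^{a+1} − (a+1)·η_{(a−1,3)}; η_{(a,3,1)} = (−1)^a + (a+2)·(D_{a−1} + 2·(D_{a−2} + D_{a−3})); η_{(a,2,2)} = (−1)^{a+1}·(a+3) + (a+2)·(a+1)·D_{a−2}; η_{(a,2,1,1)} = (a+3)·((−1)^{a+1} + a·D_{a−2}); and η_{(a,1,1,1,1)} = D_a + 4·D_{a−1}. -/

import Mathlib

/-- Derangement numbers: `D 0 = 1`, `D (m+1) = (m+1) * D m + (-1)^(m+1)`. -/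
def derange : ℕ → ℤ
  | 0 => 1
  | n + 1 => (n + 1 : ℤ) * derange n + (-1) ^ (n + 1)

/-- Subtract one from every part and discard the parts that become zero
(deleting the first column of the Ferrers diagram). -/
def strip (l : List ℕ) : List ℕ := (l.map (· - 1)).filter (fun x => 0 < x)

lemma strip_measure (l : List ℕ) : (strip l).sum + (strip l).length ≤ l.sum := by
  induction l with
  | nil => simp [strip]
  | cons x t ih =>
      simp only [strip, List.map_cons, List.filter_cons] at ih ⊢
      by_cases hx : 0 < x - 1 <;> simp [hx] <;> omega

/-- The eigenvalues of the derangement graph, defined by Renteln's recurrence: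
`η ∅ = 1` and `η λ = (-1)^h (η (λ-ĥ) + (-1)^{λ₁} h η (λ-ĉ))`, where
`h = λ₁ + r - 1` is the hook size, `λ-ĥ = strip (tail λ)` removes the hook,
and `λ-ĉ = strip λ` removes the first column. -/
def eta : List ℕ → ℤ
  | [] => 1
  | a :: t =>
      (-1) ^ (a + t.length) *
        (eta (strip t) + (-1) ^ a * ((a : ℤ) + t.length) * eta (strip (a :: t)))
  termination_by l => l.sum + l.length
  decreasing_by
  · have h1 := strip_measure t
    simp only [List.sum_cons, List.length_cons]
    omega
  · have h1 := strip_measure (a :: t)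
    simp only [List.sum_cons, List.length_cons] at h1 ⊢
    omega

/-- `l` is (the list of parts of) a partition of `n`: weakly decreasing,
all parts positive, summing to `n`. -/
def IsPartition (n : ℕ) (l : List ℕ) : Prop :=
  l.Pairwise (· ≥ ·) ∧ (∀ x ∈ l, 0 < x) ∧ l.sum = n

/-- The hook partition `(a, 1^(n-a))` of `n`. -/
def hookP (n a : ℕ) : List ℕ := a :: List.replicate (n - a) 1

lemma eta_cons (a : ℕ) (t : List ℕ) : eta (a :: t) =
    (-1) ^ (a + t.length) *
      (eta (strip t) + (-1) ^ a * ((a : ℤ) + t.length) * eta (strip (a :: t))) := by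
  rw [eta]

lemma eta_nil : eta [] = 1 := by rw [eta]

lemma strip_nil : strip [] = [] := rfl

lemma p1 : ((-1:ℤ))^(1:ℕ) = -1 := by norm_num
lemma p2 : ((-1:ℤ))^(2:ℕ) = 1 := by norm_num
lemma p3 : ((-1:ℤ))^(3:ℕ) = -1 := by norm_num
lemma p4 : ((-1:ℤ))^(4:ℕ) = 1 := by norm_num

lemma eta_single : ∀ n : ℕ, eta [n] = derange n
  | 0 => by norm_num [eta_cons, eta_nil, strip, derange]
  | 1 => by norm_num [eta_cons, eta_nil, strip, derange]
  | (n+2) => by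
      have ih := eta_single (n+1)
      have hs : strip [n+2] = [n+1] := by simp [strip]
      rw [eta_cons, hs, ih, show derange (n+2) = ((n:ℤ)+1+1) * derange (n+1) + (-1)^(n+1+1) from rfl]
      simp only [eta_nil, List.length_nil]
      push_cast
      rcases neg_one_pow_eq_or ℤ n with h | h <;>
        simp only [strip_nil, eta_nil, pow_add, h, p1, p2, p3, p4, one_mul, mul_one, neg_mul, mul_neg, neg_neg] <;> ring

lemma eta_two_one (n : ℕ) : eta [n+2, 1] = -(derange (n+2) + derange (n+1)) := by
  have hs : strip [n+2, 1] = [n+1] := by simp [strip]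
  have hs2 : strip [1] = [] := by simp [strip]
  rw [eta_cons, hs, hs2, eta_nil, eta_single,
    show derange (n+2) = ((n:ℤ)+1+1) * derange (n+1) + (-1)^(n+1+1) from rfl]
  simp only [List.length_cons, List.length_nil]
  push_cast
  rcases neg_one_pow_eq_or ℤ n with h | h <;>
    simp only [strip_nil, eta_nil, pow_add, h, p1, p2, p3, p4, one_mul, mul_one, neg_mul, mul_neg, neg_neg] <;> ring

lemma eta_three_two (n : ℕ) : eta [n+3, 2] = ((n:ℤ)+4) * (derange (n+2) + derange (n+1)) := by
  have hs : strip [n+3, 2] = [n+2, 1] := by simp [strip]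
  have hs2 : strip [2] = [1] := by simp [strip]
  have h1 : eta [1] = 0 := by norm_num [eta_cons, eta_nil, strip]
  rw [eta_cons, hs, hs2, h1, eta_two_one]
  simp only [List.length_cons, List.length_nil]
  push_cast
  rcases neg_one_pow_eq_or ℤ n with h | h <;>
    simp only [strip_nil, eta_nil, pow_add, h, p1, p2, p3, p4, one_mul, mul_one, neg_mul, mul_neg, neg_neg] <;> ring

lemma eta_two_one_one (n : ℕ) : eta [n+2, 1, 1] = (-1)^n + ((n:ℤ)+4) * derange (n+1) := by
  have hs : strip [n+2, 1, 1] = [n+1] := by simp [strip]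
  have hs2 : strip [1, 1] = [] := by simp [strip]
  rw [eta_cons, hs, hs2, eta_nil, eta_single]
  simp only [List.length_cons, List.length_nil]
  push_cast
  rcases neg_one_pow_eq_or ℤ n with h | h <;>
    simp only [strip_nil, eta_nil, pow_add, h, p1, p2, p3, p4, one_mul, mul_one, neg_mul, mul_neg, neg_neg] <;> ring

/-- Closed formulas for the eigenvalues of partitions of `n = a + 4` with first part
`a ≥ 4`. -/
theorem eta_n_minus_four_values (a : ℕ) (ha : 4 ≤ a) :
    eta [a, 4] = 2 * (-1) ^ (a + 1) - ((a : ℤ) + 1) * eta [a - 1, 3] ∧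
    eta [a, 3, 1] =
      (-1) ^ a + ((a : ℤ) + 2) * (derange (a - 1) + 2 * (derange (a - 2) + derange (a - 3))) ∧
    eta [a, 2, 2] = (-1) ^ (a + 1) * ((a : ℤ) + 3) + ((a : ℤ) + 2) * ((a : ℤ) + 1) * derange (a - 2) ∧
    eta [a, 2, 1, 1] = ((a : ℤ) + 3) * ((-1) ^ (a + 1) + (a : ℤ) * derange (a - 2)) ∧
    eta [a, 1, 1, 1, 1] = derange a + 4 * derange (a - 1) := by
  obtain ⟨b, rfl⟩ : ∃ b, a = b + 4 := ⟨a - 4, by omega⟩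
  have e3 : eta [3] = 2 := by norm_num [eta_cons, eta_nil, strip]
  have e2 : eta [2] = 1 := by norm_num [eta_cons, eta_nil, strip]
  have e11 : eta [1,1] = -1 := by norm_num [eta_cons, eta_nil, strip]
  have e1 : eta [1] = 0 := by norm_num [eta_cons, eta_nil, strip]
  refine ⟨?_, ?_, ?_, ?_, ?_⟩
  · have hs : strip [b+4, 4] = [b+3, 3] := by simp [strip]
    have hs2 : strip [4] = [3] := by simp [strip]
    rw [eta_cons, hs, hs2, e3, show b + 4 - 1 = b + 3 from by omega]
    simp only [List.length_cons, List.length_nil]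
    push_cast
    rcases neg_one_pow_eq_or ℤ b with h | h <;>
      simp only [strip_nil, eta_nil, pow_add, h, p1, p2, p3, p4, one_mul, mul_one, neg_mul, mul_neg, neg_neg] <;> ring
  · have hs : strip [b+4, 3, 1] = [b+3, 2] := by simp [strip]
    have hs2 : strip [3, 1] = [2] := by simp [strip]
    rw [eta_cons, hs, hs2, e2, show ([(b:ℕ)+3, 2] : List ℕ) = [b+3, 2] from rfl]
    rw [show (b:ℕ)+3 = b + 3 from rfl]
    rw [show ∀ m:ℕ, eta [m+3, 2] = ((m:ℤ)+4) * (derange (m+2) + derange (m+1)) from eta_three_two]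
    rw [show b + 4 - 1 = b + 3 from by omega, show b + 4 - 2 = b + 2 from by omega,
      show b + 4 - 3 = b + 1 from by omega]
    have hd : derange (b+3) = ((b:ℤ)+2) * (derange (b+2) + derange (b+1)) := by
      rw [show derange (b+3) = ((b:ℤ)+2+1) * derange (b+2) + (-1)^(b+2+1) from rfl,
        show derange (b+2) = ((b:ℤ)+1+1) * derange (b+1) + (-1)^(b+1+1) from rfl]
      rcases neg_one_pow_eq_or ℤ b with h | h <;>
        simp only [strip_nil, eta_nil, pow_add, h, p1, p2, p3, p4, one_mul, mul_one, neg_mul, mul_neg, neg_neg] <;> ring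
    rw [hd]
    simp only [List.length_cons, List.length_nil]
    push_cast
    rcases neg_one_pow_eq_or ℤ b with h | h <;>
      simp only [strip_nil, eta_nil, pow_add, h, p1, p2, p3, p4, one_mul, mul_one, neg_mul, mul_neg, neg_neg] <;> ring
  · have hs : strip [b+4, 2, 2] = [b+3, 1, 1] := by simp [strip]
    have hs2 : strip [2, 2] = [1, 1] := by simp [strip]
    rw [eta_cons, hs, hs2, e11, show (b:ℕ) + 3 = (b+1) + 2 from by omega, eta_two_one_one,
      show b + 4 - 2 = b + 2 from by omega,
      show derange (b+2) = ((b:ℤ)+1+1) * derange (b+1) + (-1)^(b+1+1) from rfl]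
    simp only [List.length_cons, List.length_nil]
    push_cast
    rcases neg_one_pow_eq_or ℤ b with h | h <;>
      simp only [strip_nil, eta_nil, pow_add, h, p1, p2, p3, p4, one_mul, mul_one, neg_mul, mul_neg, neg_neg] <;> ring
  · have hs : strip [b+4, 2, 1, 1] = [b+3, 1] := by simp [strip]
    have hs2 : strip [2, 1, 1] = [1] := by simp [strip]
    rw [eta_cons, hs, hs2, e1, show (b:ℕ) + 3 = (b+1) + 2 from by omega, eta_two_one,
      show b + 4 - 2 = b + 2 from by omega,
      show derange ((b+1)+2) = ((b:ℤ)+2+1) * derange (b+2) + (-1)^(b+2+1) from rfl,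
      show derange (b+2) = ((b:ℤ)+1+1) * derange (b+1) + (-1)^(b+1+1) from rfl]
    simp only [List.length_cons, List.length_nil]
    push_cast
    rcases neg_one_pow_eq_or ℤ b with h | h <;>
      simp only [strip_nil, eta_nil, pow_add, h, p1, p2, p3, p4, one_mul, mul_one, neg_mul, mul_neg, neg_neg] <;> ring
  · have hs : strip [b+4, 1, 1, 1, 1] = [b+3] := by simp [strip]
    have hs2 : strip [1,1,1,1] = [] := by simp [strip]
    rw [eta_cons, hs, hs2, eta_nil, eta_single,
      show b + 4 - 1 = b + 3 from by omega,
      show derange (b+4) = ((b:ℤ)+3+1) * derange (b+3) + (-1)^(b+3+1) from rfl]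
    simp only [List.length_cons, List.length_nil]
    push_cast
    rcases neg_one_pow_eq_or ℤ b with h | h <;>
      simp only [strip_nil, eta_nil, pow_add, h, p1, p2, p3, p4, one_mul, mul_one, neg_mul, mul_neg, neg_neg] <;> ring
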